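/- Let K ≥ 1 be a real number and suppose γ₁ > coth 1 and γ₂ > K·coth K, where coth x = cosh x / sinh x. Set ζ = (γ₁ − coth 1)/(γ₁ + coth 1) and w₀ = ω(z₀). Then for every real k with 1 ≤ k ≤ K: (i) if w₀ ≤ ζ, then |ω(k·coth k)| ≤ ζ (the convergence factor with θ = 0); (ii) if w₀ > ζ, then with θ = (w₀ − ζ)/(2 + w₀ − ζ) one has |θ − (1−θ)·ω(k·coth k)| ≤ (w₀ + ζ)/(2 + w₀ − ζ); moreover (w₀ + ζ)/(2 + w₀ − ζ) ≤ (1 + ζ)/(3 − ζ). -/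

import Mathlib

/-- With `γ₁, γ₂ > 0`, `ω(z) = ((γ₂ - z)/(γ₂ + z))·((z - γ₁)/(z + γ₁))`,
`z₀ = √(γ₁γ₂)`, `K ≥ 1`, `γ₁ > coth 1` and `γ₂ > K·coth K`
(where `coth x = cosh x / sinh x`), setting `ζ = (γ₁ - coth 1)/(γ₁ + coth 1)` and
`w₀ = ω(z₀)`: for every `1 ≤ k ≤ K`, (i) if `w₀ ≤ ζ` then `|ω(k·coth k)| ≤ ζ`,
(ii) if `w₀ > ζ` then with `θ = (w₀ - ζ)/(2 + w₀ - ζ)` one has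
`|θ - (1-θ)·ω(k·coth k)| ≤ (w₀ + ζ)/(2 + w₀ - ζ)`; moreover
`(w₀ + ζ)/(2 + w₀ - ζ) ≤ (1 + ζ)/(3 - ζ)`. -/
theorem vonNeumann_rate_large_gamma1 (γ1 γ2 K : ℝ) (hγ1 : 0 < γ1) (hγ2 : 0 < γ2)
    (hK : 1 ≤ K)
    (hγ1' : Real.cosh 1 / Real.sinh 1 < γ1)
    (hγ2' : K * (Real.cosh K / Real.sinh K) < γ2)
    (ω : ℝ → ℝ)
    (hω : ∀ z : ℝ, ω z = ((γ2 - z) / (γ2 + z)) * ((z - γ1) / (z + γ1)))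
    (z0 ζ w0 : ℝ) (hz0 : z0 = Real.sqrt (γ1 * γ2))
    (hζ : ζ = (γ1 - Real.cosh 1 / Real.sinh 1) / (γ1 + Real.cosh 1 / Real.sinh 1))
    (hw0 : w0 = ω z0) :
    (∀ k : ℝ, 1 ≤ k → k ≤ K →
        (w0 ≤ ζ → |ω (k * (Real.cosh k / Real.sinh k))| ≤ ζ) ∧
        (ζ < w0 →
          |(w0 - ζ) / (2 + w0 - ζ) -
              (1 - (w0 - ζ) / (2 + w0 - ζ)) * ω (k * (Real.cosh k / Real.sinh k))| ≤
            (w0 + ζ) / (2 + w0 - ζ))) ∧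
      (w0 + ζ) / (2 + w0 - ζ) ≤ (1 + ζ) / (3 - ζ) := by
  have hs1 : 0 < Real.sinh 1 := Real.sinh_pos_iff.mpr one_pos
  set c : ℝ := Real.cosh 1 / Real.sinh 1 with hcdef
  have hcpos : 0 < c := div_pos (Real.cosh_pos 1) hs1
  -- basic facts about ζ
  have hζ0 : 0 ≤ ζ := by
    rw [hζ]
    exact div_nonneg (by linarith) (by positivity)
  have hζ1 : ζ < 1 := by
    rw [hζ, div_lt_one (by positivity)]
    linarith
  -- facts about z0
  have hz0pos : 0 < z0 := by
    rw [hz0]; exact Real.sqrt_pos.mpr (mul_pos hγ1 hγ2)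
  have hz0sq : z0 ^ 2 = γ1 * γ2 := by
    rw [hz0]; exact Real.sq_sqrt (mul_pos hγ1 hγ2).le
  -- explicit form of w0
  have hw0' : w0 = ((γ2 - z0) * (z0 - γ1)) / ((γ2 + z0) * (z0 + γ1)) := by
    rw [hw0, hω, div_mul_div_comm]
  have hD0 : 0 < (γ2 + z0) * (z0 + γ1) := by positivity
  have hN0 : 0 ≤ (γ2 - z0) * (z0 - γ1) := by
    nlinarith [sq_nonneg (γ1 - γ2), hz0pos, hz0sq]
  have hw0nn : 0 ≤ w0 := by rw [hw0']; exact div_nonneg hN0 hD0.le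
  have hw0le1 : w0 ≤ 1 := by
    rw [hw0', div_le_one hD0]
    nlinarith [hz0sq, hz0pos]
  -- main bounds for ω on [c, γ2)
  have hbound : ∀ z : ℝ, c ≤ z → z < γ2 → -ζ ≤ ω z ∧ ω z ≤ w0 := by
    intro z hz1 hz2
    have hzpos : 0 < z := lt_of_lt_of_le hcpos hz1
    have hd1 : 0 < γ2 + z := by linarith
    have hd2 : 0 < z + γ1 := by linarith
    have hωz : ω z = ((γ2 - z) * (z - γ1)) / ((γ2 + z) * (z + γ1)) := by
      rw [hω, div_mul_div_comm]
    constructor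
    · -- lower bound
      rw [hωz, hζ, ← neg_div, div_le_div_iff₀ (by positivity : (0:ℝ) < γ1 + c) (by positivity)]
      nlinarith [mul_nonneg (mul_nonneg hγ1.le (by linarith : (0:ℝ) ≤ γ2 - z))
          (by linarith : (0:ℝ) ≤ z - c),
        mul_nonneg (mul_nonneg (by linarith : (0:ℝ) ≤ γ1 - c) hzpos.le) hd2.le]
    · -- upper bound: ω z ≤ w0
      rw [hωz, hw0', div_le_div_iff₀ (by positivity) hD0]
      have hkey : (γ2 - z0) * (z0 - γ1) * ((γ2 + z) * (z + γ1)) -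
          (γ2 - z) * (z - γ1) * ((γ2 + z0) * (z0 + γ1)) =
          2 * (γ1 + γ2) * z0 * (z - z0) ^ 2 := by
        linear_combination (2 * (γ1 + γ2) * (z - z0)) * hz0sq
      nlinarith [mul_nonneg (mul_nonneg (by positivity : (0:ℝ) ≤ 2 * (γ1 + γ2)) hz0pos.le)
        (sq_nonneg (z - z0)), hkey]
  -- monotonicity of x ↦ x * cosh x / sinh x on [1, ∞)
  have hmono : MonotoneOn (fun x : ℝ => x * Real.cosh x / Real.sinh x) (Set.Ici 1) := by
    have hsinh : ∀ x : ℝ, x ∈ Set.Ici (1:ℝ) → Real.sinh x ≠ 0 := fun x hx =>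
      (Real.sinh_pos_iff.mpr (by linarith [Set.mem_Ici.mp hx])).ne'
    have hder : ∀ x : ℝ, 1 ≤ x → HasDerivAt (fun x : ℝ => x * Real.cosh x / Real.sinh x)
        (((1 * Real.cosh x + x * Real.sinh x) * Real.sinh x -
          x * Real.cosh x * Real.cosh x) / Real.sinh x ^ 2) x := by
      intro x hx
      exact ((hasDerivAt_id x).mul (Real.hasDerivAt_cosh x)).div (Real.hasDerivAt_sinh x)
        (hsinh x hx)
    apply monotoneOn_of_deriv_nonneg (convex_Ici 1)
    · exact ContinuousOn.div (by fun_prop) Real.continuous_sinh.continuousOn hsinh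
    · intro x hx
      rw [interior_Ici] at hx
      exact ((hder x (le_of_lt hx)).differentiableAt).differentiableWithinAt
    · intro x hx
      rw [interior_Ici] at hx
      have hx1 : (1:ℝ) ≤ x := le_of_lt hx
      rw [(hder x hx1).deriv]
      have hxs : x ≤ Real.sinh x * Real.cosh x := by
        have h2 : 2 * x ≤ Real.sinh (2 * x) := Real.self_le_sinh_iff.mpr (by linarith)
        rw [Real.sinh_two_mul] at h2; linarith
      have hcs : Real.cosh x ^ 2 - Real.sinh x ^ 2 = 1 := Real.cosh_sq_sub_sinh_sq x
      apply div_nonneg _ (sq_nonneg _)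
      nlinarith
  refine ⟨fun k hk1 hkK => ?_, ?_⟩
  · have hks : 0 < Real.sinh k := Real.sinh_pos_iff.mpr (by linarith)
    set z : ℝ := k * (Real.cosh k / Real.sinh k) with hzdef
    have hzeq : z = k * Real.cosh k / Real.sinh k := by rw [hzdef, mul_div_assoc]
    have hcz : c ≤ z := by
      have h1 : 1 * Real.cosh 1 / Real.sinh 1 ≤ k * Real.cosh k / Real.sinh k :=
        hmono (Set.mem_Ici.mpr le_rfl) (Set.mem_Ici.mpr hk1) hk1
      rw [one_mul, mul_div_assoc] at h1
      exact h1
    have hzK : z ≤ K * (Real.cosh K / Real.sinh K) := by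
      have h2 : k * Real.cosh k / Real.sinh k ≤ K * Real.cosh K / Real.sinh K :=
        hmono (Set.mem_Ici.mpr hk1) (Set.mem_Ici.mpr (le_trans hk1 hkK)) hkK
      rw [mul_div_assoc, mul_div_assoc] at h2
      exact h2
    have hzγ2 : z < γ2 := lt_of_le_of_lt hzK hγ2'
    obtain ⟨hlo, hhi⟩ := hbound z hcz hzγ2
    constructor
    · intro hwζ
      rw [abs_le]
      exact ⟨by linarith, by linarith⟩
    · intro hζw
      have hd : (0:ℝ) < 2 + w0 - ζ := by linarith
      have hrw : (w0 - ζ) / (2 + w0 - ζ) - (1 - (w0 - ζ) / (2 + w0 - ζ)) * ω z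
          = (w0 - ζ - 2 * ω z) / (2 + w0 - ζ) := by
        field_simp
        ring
      rw [hrw, abs_div, abs_of_pos hd]
      gcongr
      rw [abs_le]
      exact ⟨by linarith, by linarith⟩
  · have hd : (0:ℝ) < 2 + w0 - ζ := by linarith
    rw [div_le_div_iff₀ hd (by linarith : (0:ℝ) < 3 - ζ)]
    have hprod : 0 ≤ (1 - w0) * (1 - ζ) :=
      mul_nonneg (by linarith) (by linarith)
    have hexp : (1 + ζ) * (2 + w0 - ζ) - (w0 + ζ) * (3 - ζ) = 2 * ((1 - w0) * (1 - ζ)) := by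
      ring
    linarith [hprod, hexp]
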